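/- Let M : Fin k → Fin l → ℝ be a Monge matrix and suppose row r attains the column minimum of column c, i.e. M r c = min over all rows i of M i c. Then: (1) for every column c' ≤ c there exists a row r' ≥ r such that M r' c' = min over all rows i of M i c'; and (2) for every column c' ≥ c there exists a row r' ≤ r such that M r' c' = min over all rows i of M i c'. (Fact 3 of the paper: column minima of columns to the left can be found weakly below, and of columns to the right weakly above.) -/
import Mathlib


/-- A rectangular Monge matrix. -/
def IsMonge {k l : ℕ} (M : Fin k → Fin l → ℝ) : Prop :=
  ∀ i1 i2 : Fin k, ∀ j1 j2 : Fin l, i1 ≤ i2 → j1 ≤ j2 →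
    M i2 j1 + M i1 j2 ≤ M i1 j1 + M i2 j2

/-- Row `r` attains the column minimum of column `c`. -/
def ColMinAt {k l : ℕ} (M : Fin k → Fin l → ℝ) (r : Fin k) (c : Fin l) : Prop :=
  ∀ i : Fin k, M r c ≤ M i c

/-- Fact 3: if row `r` attains the column minimum of column `c`, then every
column to the left of `c` has a column minimum weakly below `r`, and every
column to the right of `c` has a column minimum weakly above `r`. -/
theorem monge_colMin_monotone {k l : ℕ} (M : Fin k → Fin l → ℝ)
    (hM : IsMonge M) (r : Fin k) (c : Fin l) (hr : ColMinAt M r c) :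
    (∀ c' : Fin l, c' ≤ c → ∃ r' : Fin k, r ≤ r' ∧ ColMinAt M r' c') ∧
    (∀ c' : Fin l, c ≤ c' → ∃ r' : Fin k, r' ≤ r ∧ ColMinAt M r' c') := by
  constructor
  · intro c' hc'
    obtain ⟨r', hr'mem, hr'min⟩ :=
      Finset.exists_min_image (Finset.univ.filter (fun i : Fin k => r ≤ i))
        (fun i => M i c') ⟨r, by simp⟩
    simp only [Finset.mem_filter, Finset.mem_univ, true_and] at hr'mem hr'min
    refine ⟨r', hr'mem, fun i => ?_⟩
    rcases le_total r i with h | h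
    · exact hr'min i h
    · -- i ≤ r: Monge with i1 = i, i2 = r, j1 = c', j2 = c
      have hmg := hM i r c' c h hc'
      have : M r c' ≤ M i c' := by
        have := hr i
        linarith
      exact le_trans (hr'min r le_rfl) this
  · intro c' hc'
    obtain ⟨r', hr'mem, hr'min⟩ :=
      Finset.exists_min_image (Finset.univ.filter (fun i : Fin k => i ≤ r))
        (fun i => M i c') ⟨r, by simp⟩
    simp only [Finset.mem_filter, Finset.mem_univ, true_and] at hr'mem hr'min
    refine ⟨r', hr'mem, fun i => ?_⟩
    rcases le_total i r with h | h
    · exact hr'min i h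
    · have hmg := hM r i c c' h hc'
      have : M r c' ≤ M i c' := by
        have := hr i
        linarith
      exact le_trans (hr'min r le_rfl) this
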